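/- In the Klein model, Euclidean segments are hyperbolic geodesics: for any points x, y in the open unit ball B ⊂ ℝ^n and any z lying on the Euclidean segment [x, y] (i.e. z = (1-t)x + ty for some t ∈ [0,1]), one has d_K(x, y) = d_K(x, z) + d_K(z, y). -/

import Mathlib

open Metric Set
open scoped RealInnerProductSpace

set_option maxHeartbeats 1000000

noncomputable def arcosh (x : ℝ) : ℝ := Real.log (x + Real.sqrt (x ^ 2 - 1))

noncomputable def dK {n : ℕ} (x y : EuclideanSpace ℝ (Fin n)) : ℝ :=
  arcosh ((1 - ⟪x, y⟫) / Real.sqrt ((1 - ‖x‖ ^ 2) * (1 - ‖y‖ ^ 2)))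

lemma arcosh_div_sqrt (Aa Bb Cc : ℝ) (hA : 0 < Aa) (hB : 0 < Bb)
    (hD : 0 ≤ Cc ^ 2 - Aa * Bb) :
    arcosh (Cc / Real.sqrt (Aa * Bb)) =
      Real.log ((Cc + Real.sqrt (Cc ^ 2 - Aa * Bb)) / Real.sqrt (Aa * Bb)) := by
  have hAB : 0 < Aa * Bb := mul_pos hA hB
  unfold arcosh
  have h1 : (Cc / Real.sqrt (Aa * Bb)) ^ 2 - 1 = (Cc ^ 2 - Aa * Bb) / (Aa * Bb) := by
    rw [div_pow, Real.sq_sqrt hAB.le]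
    field_simp
  rw [h1, Real.sqrt_div hD, ← add_div]

theorem klein_segments_are_geodesics (n : ℕ) (hn : 1 ≤ n)
    (x y : EuclideanSpace ℝ (Fin n))
    (hx : x ∈ ball (0 : EuclideanSpace ℝ (Fin n)) 1)
    (hy : y ∈ ball (0 : EuclideanSpace ℝ (Fin n)) 1)
    (t : ℝ) (ht0 : 0 ≤ t) (ht1 : t ≤ 1) :
    dK x y = dK x ((1 - t) • x + t • y) + dK ((1 - t) • x + t • y) y := by
  set z : EuclideanSpace ℝ (Fin n) := (1 - t) • x + t • y with hz
  have hxn : ‖x‖ < 1 := by simpa using hx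
  have hyn : ‖y‖ < 1 := by simpa using hy
  set a : ℝ := ‖x‖ ^ 2 with ha
  set b : ℝ := ‖y‖ ^ 2 with hb
  set c : ℝ := ⟪x, y⟫ with hc
  have ha1 : a < 1 := by nlinarith [norm_nonneg x]
  have hb1 : b < 1 := by nlinarith [norm_nonneg y]
  have ha0 : 0 ≤ a := sq_nonneg _
  have hb0 : 0 ≤ b := sq_nonneg _
  have hcs : c ≤ ‖x‖ * ‖y‖ := real_inner_le_norm x y
  have hc1 : c < 1 :=
    lt_of_le_of_lt hcs (by nlinarith [norm_nonneg x, norm_nonneg y])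
  have hab2c : 0 ≤ a + b - 2 * c := by
    nlinarith [sq_nonneg (‖x‖ - ‖y‖)]
  -- inner products with z
  have hxz : ⟪x, z⟫ = (1 - t) * a + t * c := by
    rw [hz, inner_add_right, real_inner_smul_right, real_inner_smul_right,
      real_inner_self_eq_norm_sq, ← hc, ← ha]
  have hzy : ⟪z, y⟫ = (1 - t) * c + t * b := by
    rw [hz, inner_add_left, real_inner_smul_left, real_inner_smul_left,
      real_inner_self_eq_norm_sq, ← hc, ← hb]
  have hzz : ‖z‖ ^ 2 = (1 - t) ^ 2 * a + 2 * t * (1 - t) * c + t ^ 2 * b := by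
    rw [← real_inner_self_eq_norm_sq, hz]
    simp only [inner_add_left, inner_add_right, real_inner_smul_left, real_inner_smul_right]
    rw [real_inner_self_eq_norm_sq, real_inner_self_eq_norm_sq, ← ha, ← hb]
    have hyx : ⟪y, x⟫ = c := by rw [real_inner_comm, ← hc]
    rw [hyx]
    ring
  set A : ℝ := 1 - a with hA
  set B : ℝ := 1 - b with hB
  set C : ℝ := 1 - c with hC
  set P : ℝ := (1 - t) * A + t * C with hP
  set Q : ℝ := (1 - t) * C + t * B with hQ
  set R : ℝ := (1 - t) * P + t * Q with hR
  have hApos : 0 < A := by rw [hA]; linarith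
  have hBpos : 0 < B := by rw [hB]; linarith
  have hCpos : 0 < C := by rw [hC]; linarith
  have hconv : ∀ u v : ℝ, 0 < u → 0 < v → 0 < (1 - t) * u + t * v := by
    intro u v hu hv
    rcases eq_or_lt_of_le ht1 with h | h
    · have he : (1 - t) * u + t * v = v := by rw [h]; ring
      rw [he]; exact hv
    · have h1 : 0 < (1 - t) * u := mul_pos (by linarith) hu
      have h2 : 0 ≤ t * v := mul_nonneg ht0 hv.le
      linarith
  have hPpos : 0 < P := hconv A C hApos hCpos
  have hQpos : 0 < Q := hconv C B hCpos hBpos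
  have hRpos : 0 < R := hconv P Q hPpos hQpos
  set D : ℝ := C ^ 2 - A * B with hD
  have hDnn : 0 ≤ D := by
    have key : D = (a - c) ^ 2 + (1 - a) * (a + b - 2 * c) := by
      rw [hD, hA, hB, hC]; ring
    rw [key]
    have := mul_nonneg (by linarith : (0:ℝ) ≤ 1 - a) hab2c
    nlinarith [sq_nonneg (a - c)]
  set s : ℝ := Real.sqrt D with hs
  have hs2 : s ^ 2 = D := Real.sq_sqrt hDnn
  have hsnn : 0 ≤ s := Real.sqrt_nonneg _
  -- rewrite the three distances
  have e1 : dK x y = Real.log ((C + s) / Real.sqrt (A * B)) := by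
    show arcosh ((1 - ⟪x, y⟫) / Real.sqrt ((1 - ‖x‖ ^ 2) * (1 - ‖y‖ ^ 2)))
      = Real.log ((C + s) / Real.sqrt (A * B))
    rw [← hc, ← ha, ← hb, ← hA, ← hB, ← hC,
      arcosh_div_sqrt A B C hApos hBpos (by rw [← hD]; exact hDnn), ← hD, ← hs]
  have e2 : dK x z = Real.log ((P + t * s) / Real.sqrt (A * R)) := by
    show arcosh ((1 - ⟪x, z⟫) / Real.sqrt ((1 - ‖x‖ ^ 2) * (1 - ‖z‖ ^ 2)))
      = Real.log ((P + t * s) / Real.sqrt (A * R))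
    have h1 : 1 - ⟪x, z⟫ = P := by rw [hxz, hP, hA, hC]; ring
    have h2 : 1 - ‖z‖ ^ 2 = R := by rw [hzz, hR, hP, hQ, hA, hB, hC]; ring
    have h3 : P ^ 2 - A * R = t ^ 2 * D := by
      rw [hR, hP, hQ, hD, hA, hB, hC]; ring
    have h4 : 0 ≤ P ^ 2 - A * R := by rw [h3]; positivity
    rw [h1, ← ha, ← hA, h2, arcosh_div_sqrt A R P hApos hRpos h4, h3,
      Real.sqrt_mul (sq_nonneg t), Real.sqrt_sq ht0, ← hs]
  have e3 : dK z y = Real.log ((Q + (1 - t) * s) / Real.sqrt (R * B)) := by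
    show arcosh ((1 - ⟪z, y⟫) / Real.sqrt ((1 - ‖z‖ ^ 2) * (1 - ‖y‖ ^ 2)))
      = Real.log ((Q + (1 - t) * s) / Real.sqrt (R * B))
    have h1 : 1 - ⟪z, y⟫ = Q := by rw [hzy, hQ, hB, hC]; ring
    have h2 : 1 - ‖z‖ ^ 2 = R := by rw [hzz, hR, hP, hQ, hA, hB, hC]; ring
    have h3 : Q ^ 2 - R * B = (1 - t) ^ 2 * D := by
      rw [hR, hP, hQ, hD, hA, hB, hC]; ring
    have h4 : 0 ≤ Q ^ 2 - R * B := by rw [h3]; positivity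
    rw [h1, ← hb, ← hB, h2, arcosh_div_sqrt R B Q hRpos hBpos h4, h3,
      Real.sqrt_mul (sq_nonneg (1 - t)), Real.sqrt_sq (by linarith), ← hs]
  rw [e1, e2, e3]
  have hsA : 0 < Real.sqrt (A * R) := Real.sqrt_pos.2 (mul_pos hApos hRpos)
  have hsB : 0 < Real.sqrt (R * B) := Real.sqrt_pos.2 (mul_pos hRpos hBpos)
  have hx1 : 0 < (P + t * s) / Real.sqrt (A * R) := by
    have : 0 ≤ t * s := mul_nonneg ht0 hsnn
    apply div_pos (by linarith) hsA
  have hy1 : 0 < (Q + (1 - t) * s) / Real.sqrt (R * B) := by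
    have : 0 ≤ (1 - t) * s := mul_nonneg (by linarith) hsnn
    apply div_pos (by linarith) hsB
  rw [← Real.log_mul (ne_of_gt hx1) (ne_of_gt hy1)]
  congr 1
  have hnum : (P + t * s) * (Q + (1 - t) * s) = R * (C + s) := by
    rw [hR, hP, hQ]
    linear_combination (t * (1 - t)) * hs2
  have hden : Real.sqrt (A * R) * Real.sqrt (R * B) = R * Real.sqrt (A * B) := by
    rw [← Real.sqrt_mul (mul_nonneg hApos.le hRpos.le)]
    have h5 : A * R * (R * B) = R ^ 2 * (A * B) := by ring
    rw [h5, Real.sqrt_mul (sq_nonneg R), Real.sqrt_sq hRpos.le]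
  rw [div_mul_div_comm, hnum, hden, mul_div_mul_left _ _ (ne_of_gt hRpos)]
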